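/- The Dirichlet convolution ring F(ℕ*,R) is isomorphic as an R-algebra to the inverse limit of the rings F(Γ(k),R) under restriction maps, and hence to the power series ring R[[x₁, x₂, x₃, ...]] in countably many variables. -/

import Mathlib

/-- Type synonym: functions from `Γ` to `R` (to carry the Dirichlet-convolution
ring structure, distinct from the pointwise one). -/
def DirF (Γ R : Type*) : Type _ := Γ → R

/-- `Γ` is a monoid of finite type: every element has finitely many factorizations. -/
def FiniteMulType (Γ : Type*) [Mul Γ] : Prop :=
  ∀ n : Γ, {p : Γ × Γ | p.1 * p.2 = n}.Finite

/-- Dirichlet convolution. -/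
noncomputable def dconv {Γ R : Type*} [Mul Γ] [NonUnitalNonAssocSemiring R]
    (α β : DirF Γ R) : DirF Γ R :=
  fun n => ∑ᶠ p ∈ {p : Γ × Γ | p.1 * p.2 = n}, α p.1 * β p.2

/-- A ring structure on `DirF Γ R` is *the* Dirichlet convolution ring structure if addition is
pointwise, multiplication is Dirichlet convolution, and the unity is `e` (`e 1 = 1`, `e n = 0`
for `n ≠ 1`). -/
def IsDirichletRing {Γ R : Type*} [Monoid Γ] [Ring R] (inst : Ring (DirF Γ R)) : Prop := by
  letI := inst
  exact (∀ α β : DirF Γ R, ∀ n : Γ, (α + β) n = α n + β n) ∧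
    (∀ α β : DirF Γ R, α * β = dconv α β) ∧
    ((1 : DirF Γ R) 1 = 1 ∧ ∀ n : Γ, n ≠ 1 → (1 : DirF Γ R) n = 0)

/-- `Γ(k)`: the submonoid of `(ℕ*,·)` generated by the first `k` primes. -/
def GammaK (k : ℕ) : Submonoid ℕ+ :=
  Submonoid.closure {p : ℕ+ | ∃ i : Fin k, (p : ℕ) = Nat.nth Nat.Prime i}

/-- Restriction `F(ℕ*,R) → F(Γ(k),R)`. -/
def resK {R : Type*} (k : ℕ) (α : DirF ℕ+ R) : DirF (GammaK k) R := fun n => α (n : ℕ+)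

noncomputable def Pp (i : ℕ) : ℕ+ := ⟨Nat.nth Nat.Prime i, (Nat.prime_nth_prime i).pos⟩

noncomputable def phi (d : ℕ →₀ ℕ) : ℕ+ := d.prod fun i k => Pp i ^ k

lemma phi_coe (d : ℕ →₀ ℕ) :
    ((phi d : ℕ+) : ℕ) = ∏ i ∈ d.support, Nat.nth Nat.Prime i ^ d i := by
  simp [phi, Finsupp.prod, Pp]
  exact Finset.prod_congr rfl fun i _ => PNat.pow_coe _ _

lemma phi_add (a b : ℕ →₀ ℕ) : phi (a + b) = phi a * phi b := by
  classical
  exact Finsupp.prod_add_index (by simp) (by intro i _ b₁ b₂; exact pow_add _ _ _)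

lemma nth_prime_inj : Function.Injective (Nat.nth Nat.Prime) :=
  Nat.nth_injective Nat.infinite_setOf_prime

lemma factorization_phi (d : ℕ →₀ ℕ) (i : ℕ) :
    ((phi d : ℕ+) : ℕ).factorization (Nat.nth Nat.Prime i) = d i := by
  classical
  rw [phi_coe, Nat.factorization_prod (fun j _ => pow_ne_zero _ (Nat.prime_nth_prime j).ne_zero)]
  rw [Finset.sum_apply']
  have : ∀ j ∈ d.support,
      ((Nat.nth Nat.Prime j ^ d j).factorization) (Nat.nth Nat.Prime i)
        = if j = i then d j else 0 := by
    intro j _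
    rw [(Nat.prime_nth_prime j).factorization_pow, Finsupp.single_apply]
    simp [nth_prime_inj.eq_iff]
  rw [Finset.sum_congr rfl this]
  by_cases hi : i ∈ d.support
  · rw [Finset.sum_ite_eq' d.support i (fun j => d j)]
    simp [hi]
  · simp only [Finset.sum_ite_eq' d.support i (fun j => d j)]
    simp [hi, Finsupp.notMem_support_iff.mp hi]

lemma phi_inj : Function.Injective phi := by
  intro a b hab
  ext i
  rw [← factorization_phi a i, ← factorization_phi b i, hab]

lemma phi_surj : Function.Surjective phi := by
  intro n
  have hn : (n : ℕ) ≠ 0 := n.ne_zero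
  classical
  have hinj : Set.InjOn (Nat.nth Nat.Prime)
      (Nat.nth Nat.Prime ⁻¹' ↑(n : ℕ).factorization.support) := nth_prime_inj.injOn
  refine ⟨Finsupp.comapDomain _ ((n : ℕ)).factorization hinj, ?_⟩
  apply PNat.coe_injective
  rw [phi_coe]
  have hsupp : (Finsupp.comapDomain _ ((n : ℕ)).factorization hinj).support
      = ((n : ℕ)).factorization.support.preimage _ hinj := rfl
  rw [hsupp]
  rw [Finset.prod_congr rfl (fun i _ => rfl)]
  have := Finset.prod_preimage (Nat.nth Nat.Prime) ((n : ℕ)).factorization.support hinj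
      (fun p => p ^ ((n : ℕ)).factorization p) ?_
  · rw [show (∏ i ∈ Finset.preimage _ _ hinj, Nat.nth Nat.Prime i ^
        (Finsupp.comapDomain _ ((n : ℕ)).factorization hinj) i)
      = ∏ i ∈ Finset.preimage _ _ hinj, Nat.nth Nat.Prime i ^
        ((n : ℕ)).factorization (Nat.nth Nat.Prime i) from rfl]
    rw [this]
    exact Nat.factorization_prod_pow_eq_self hn
  · intro p hp hrange
    exfalso
    apply hrange
    have hprime : p.Prime := Nat.prime_of_mem_primeFactors hp
    exact ⟨Nat.count Nat.Prime p, Nat.nth_count hprime⟩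

noncomputable def phiE : (ℕ →₀ ℕ) ≃ ℕ+ := Equiv.ofBijective phi ⟨phi_inj, phi_surj⟩

lemma Pp_mem_gammaK {i k : ℕ} (h : i < k) : Pp i ∈ GammaK k :=
  Submonoid.subset_closure ⟨⟨i, h⟩, rfl⟩

lemma phi_mem_gammaK (d : ℕ →₀ ℕ) {k : ℕ} (hk : ∀ i ∈ d.support, i < k) :
    phi d ∈ GammaK k :=
  Submonoid.prod_mem _ fun i hi => Submonoid.pow_mem _ (Pp_mem_gammaK (hk i hi)) _

lemma exists_mem_gammaK (n : ℕ+) : ∃ k, n ∈ GammaK k := by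
  obtain ⟨d, rfl⟩ := phi_surj n
  exact ⟨(d.support.sup id) + 1, phi_mem_gammaK d fun i hi =>
    Nat.lt_succ_of_le (Finset.le_sup (f := id) hi)⟩

lemma gammaK_mono {k k' : ℕ} (h : k ≤ k') : GammaK k ≤ GammaK k' :=
  Submonoid.closure_mono (fun _p ⟨i, hi⟩ => ⟨⟨i, lt_of_lt_of_le i.2 h⟩, hi⟩)

/-- `F(ℕ*,R)` is the inverse limit of the rings `F(Γ(k),R)` under the restriction maps
(the map to compatible families is a bijection onto the inverse limit), and `F(ℕ*,R)` is
isomorphic as an `R`-algebra to the power-series ring `R[[x₁,x₂,x₃,...]]` in countably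
many variables. -/
theorem stmt13 {R : Type*} [CommRing R]
    [instF : CommRing (DirF ℕ+ R)] (h : IsDirichletRing instF.toRing) :
    (Function.Injective (fun (α : DirF ℕ+ R) => fun k : ℕ => resK k α) ∧
      Set.range (fun (α : DirF ℕ+ R) => fun k : ℕ => resK k α)
        = {f : (k : ℕ) → DirF (GammaK k) R |
            ∀ (k k' : ℕ), k ≤ k' → ∀ (n : GammaK k) (m : GammaK k'),
              (n : ℕ+) = (m : ℕ+) → f k n = f k' m}) ∧
    ∃ e : DirF ℕ+ R ≃+* MvPowerSeries ℕ R,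
      ∀ (α : DirF ℕ+ R) (d : ℕ →₀ ℕ) (n : ℕ+),
        (n : ℕ) = ∏ i ∈ d.support, (Nat.nth Nat.Prime i) ^ (d i) →
        MvPowerSeries.coeff d (e α) = α n := by
  classical
  obtain ⟨hadd, hmul, -⟩ := h
  refine ⟨⟨?_, ?_⟩, ?_⟩
  · -- injectivity
    intro α β hab
    exact funext fun n => by
      obtain ⟨k, hk⟩ := exists_mem_gammaK n
      exact congrFun (congrFun hab k) (⟨n, hk⟩ : GammaK k)
  · -- range description
    ext f
    simp only [Set.mem_range, Set.mem_setOf_eq]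
    constructor
    · rintro ⟨α, rfl⟩ k k' _ n m hnm
      show α (n : ℕ+) = α (m : ℕ+)
      rw [hnm]
    · intro hf
      choose K hK using exists_mem_gammaK
      refine ⟨fun n => f (K n) ⟨n, hK n⟩, ?_⟩
      refine funext fun k => funext fun n => ?_
      show f (K (n : ℕ+)) ⟨(n : ℕ+), hK _⟩ = f k n
      have hm : (n : ℕ+) ∈ GammaK (max (K (n : ℕ+)) k) :=
        gammaK_mono (le_max_left _ _) (hK _)
      have h1 := hf (K (n : ℕ+)) (max (K (n : ℕ+)) k) (le_max_left _ _)
        ⟨(n : ℕ+), hK _⟩ ⟨(n : ℕ+), hm⟩ rfl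
      have h2 := hf k (max (K (n : ℕ+)) k) (le_max_right _ _) n ⟨(n : ℕ+), hm⟩ rfl
      rw [h1, h2]
  · -- ring equivalence
    have coeffmul : ∀ α β : DirF ℕ+ R, ∀ d : ℕ →₀ ℕ,
        ∀ A B : MvPowerSeries ℕ R, A = (fun d => α (phi d)) → B = (fun d => β (phi d)) →
        MvPowerSeries.coeff d (A * B) = (α * β) (phi d) := by
      rintro α β d A B hA hB
      have h1 : MvPowerSeries.coeff d (A * B)
          = ∑ p ∈ Finset.HasAntidiagonal.antidiagonal d, α (phi p.1) * β (phi p.2) := by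
        rw [MvPowerSeries.coeff_mul]
        subst hA; subst hB
        exact Finset.sum_congr rfl fun p _ => rfl
      rw [h1, hmul]
      show _ = dconv α β (phi d)
      have hset : {p : ℕ+ × ℕ+ | p.1 * p.2 = phi d}
          = ↑((Finset.HasAntidiagonal.antidiagonal d).image fun p => (phi p.1, phi p.2)) := by
        ext ⟨x, y⟩
        simp only [Set.mem_setOf_eq, Finset.coe_image, Set.mem_image, Finset.mem_coe,
          Finset.HasAntidiagonal.mem_antidiagonal, Prod.exists]
        constructor
        · intro hxy
          obtain ⟨a, rfl⟩ := phi_surj x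
          obtain ⟨b, rfl⟩ := phi_surj y
          exact ⟨a, b, phi_inj (by rw [phi_add]; exact hxy), rfl⟩
        · rintro ⟨a, b, hab, heq⟩
          obtain ⟨rfl, rfl⟩ := Prod.ext_iff.mp heq
          rw [← phi_add, hab]
      show _ = ∑ᶠ p ∈ {p : ℕ+ × ℕ+ | p.1 * p.2 = phi d}, α p.1 * β p.2
      rw [hset, finsum_mem_coe_finset, Finset.sum_image ?_]
      intro p _ q _ hpq
      obtain ⟨h1', h2'⟩ := Prod.ext_iff.mp hpq
      exact Prod.ext (phi_inj h1') (phi_inj h2')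
    refine ⟨{ toFun := fun α => fun d => α (phi d)
              invFun := fun F => fun n => F (phiE.symm n)
              left_inv := fun α => funext fun n => congrArg α (phiE.apply_symm_apply n)
              right_inv := fun F => funext fun d => congrArg F (phiE.symm_apply_apply d)
              map_mul' := fun α β => funext fun d => (coeffmul α β d _ _ rfl rfl).symm
              map_add' := fun α β => funext fun d => by
                show (α + β) (phi d) = ((fun d => α (phi d)) + (fun d => β (phi d)) :
                  MvPowerSeries ℕ R) d
                rw [hadd]
                rfl }, ?_⟩
    intro α d n hn
    have : n = phi d := PNat.coe_injective (by rw [hn, phi_coe])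
    rw [this]
    rfl
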